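/- For any words r and q of equal combined role: if r·q·r·q is a factor of some power (q·r·r·q)^n, then r and q commute. -/

import Mathlib

/-- `wpow u n` is the `n`-fold concatenation of the word `u` with itself. -/
def wpow {α : Type*} (u : List α) (n : ℕ) : List α := (List.replicate n u).flatten

lemma wpow_succ {α : Type*} (u : List α) (n : ℕ) :
    wpow u (n+1) = u ++ wpow u n := by
  simp [wpow, List.replicate_succ]

/-- A factor of `w^n` of length `|w|` is a conjugate of `w`. -/
lemma factor_pow {α : Type*} (w s : List α) (hs : s.length = w.length)
    (hw : w.length ≠ 0) :
    ∀ (n : ℕ) (p t : List α), p ++ s ++ t = wpow w n →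
      ∃ x y : List α, w = x ++ y ∧ s = y ++ x := by
  intro n
  induction n with
  | zero =>
    intro p t hpt
    simp [wpow] at hpt
    exact absurd (by rw [← hs, hpt.2.1]; rfl) hw
  | succ n ih =>
    intro p t hpt
    rw [wpow_succ] at hpt
    by_cases hp : w.length ≤ p.length
    · have hpre : w <+: p :=
        List.prefix_of_prefix_length_le ⟨wpow w n, hpt.symm⟩ ⟨s ++ t, by simp⟩ hp
      obtain ⟨p', rfl⟩ := hpre
      refine ih p' t ?_
      have h1 := hpt
      rw [List.append_assoc, List.append_assoc] at h1
      simpa [List.append_assoc] using List.append_cancel_left h1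
    · push_neg at hp
      cases n with
      | zero =>
        -- p ++ s ++ t = w, with |s| = |w| forces p = [], t = [], s = w
        simp [wpow] at hpt
        have hlen := congrArg List.length hpt
        simp [hs] at hlen
        have hp0 : p = [] := List.length_eq_zero_iff.mp (by omega)
        have ht0 : t = [] := List.length_eq_zero_iff.mp (by omega)
        subst hp0; subst ht0
        refine ⟨[], w, by simp, by simpa using hpt⟩
      | succ m =>
        rw [wpow_succ] at hpt
        refine ⟨w.take p.length, w.drop p.length, (List.take_append_drop _ _).symm, ?_⟩
        -- p is a prefix of w
        have hptake : p = w.take p.length := by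
          have h1 : p = (p ++ (s ++ t)).take p.length := by simp
          rw [List.append_assoc] at hpt
          rw [hpt] at h1
          rwa [List.take_append_of_le_length hp.le] at h1
        -- s ++ t = w.drop p.length ++ (w ++ wpow w m)
        have hst : s ++ t = w.drop p.length ++ (w ++ wpow w m) := by
          have h1 : s ++ t = (p ++ (s ++ t)).drop p.length := by simp
          rw [List.append_assoc] at hpt
          rw [hpt] at h1
          rwa [List.drop_append_of_le_length hp.le] at h1
        -- take |s| of both sides
        have h2 : s = (s ++ t).take s.length := by simp
        rw [hst] at h2
        have hlen2 : s.length = (w.drop p.length).length + p.length := by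
          simp [hs]; omega
        rw [hlen2, List.take_length_add_append, List.take_append_of_le_length hp.le] at h2
        exact h2

/-- If `y ++ x` is a square `u ++ u` (with matching lengths), then `x ++ y`
is also a square of a word of length `|u|`. -/
lemma square_conj {α : Type*} (u x y : List α) (h : y ++ x = u ++ u)
    (hlen : x.length + y.length = u.length + u.length) :
    ∃ v : List α, x ++ y = v ++ v ∧ v.length = u.length := by
  by_cases hy : y.length ≤ u.length
  · -- y is a prefix of u : u = y ++ z, x = z ++ y ++ z
    have hyp : y = u.take y.length := by
      have h1 : y = (y ++ x).take y.length := by simp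
      rw [h, List.take_append_of_le_length hy] at h1
      exact h1
    set z := u.drop y.length with hz
    have hu : u = y ++ z := by rw [hyp, hz]; simp
    have hx : x = z ++ (y ++ z) := by
      have h1 : y ++ x = y ++ (z ++ (y ++ z)) := by
        rw [h, hu]; simp [List.append_assoc]
      exact List.append_cancel_left h1
    refine ⟨z ++ y, ?_, ?_⟩
    · rw [hx]; simp [List.append_assoc]
    · have := congrArg List.length hu
      simp at this ⊢; omega
  · push_neg at hy
    have hxu : x.length ≤ u.length := by omega
    set k := y.length - u.length with hk
    have hky : y.length = u.length + k := by omega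
    have hkle : k ≤ u.length := by omega
    set z := u.take k with hz
    have hx : x = u.drop k := by
      have h1 : x = (y ++ x).drop y.length := by simp
      rw [h, hky, List.drop_length_add_append] at h1
      exact h1
    have hu : u = z ++ x := by rw [hx, hz]; simp
    have hyy : y = u ++ z := by
      have h1 : y = (y ++ x).take y.length := by simp
      rw [h, hky, List.take_length_add_append] at h1
      rw [h1, hz]
    refine ⟨x ++ z, ?_, ?_⟩
    · rw [hyy, hu]; simp [List.append_assoc]
    · have := congrArg List.length hu
      simp at this ⊢; omega

/-- If `r·q·r·q` is a factor of some power of `q·r·r·q`, then `r` and `q` commute. -/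
theorem rqrq_factor_qrrq {α : Type*} (r q : List α) (n : ℕ)
    (h : r ++ q ++ r ++ q <:+: wpow (q ++ r ++ r ++ q) n) :
    r ++ q = q ++ r := by
  by_cases hz : (q ++ r ++ r ++ q).length = 0
  · simp at hz
    rw [hz.1, hz.2.1]
  · obtain ⟨p, t, hpt⟩ := h
    obtain ⟨x, y, hw, hsxy⟩ :=
      factor_pow (q ++ r ++ r ++ q) (r ++ q ++ r ++ q) (by simp; omega) hz n p t hpt
    have hsq : y ++ x = (r ++ q) ++ (r ++ q) := by
      rw [← hsxy]; simp [List.append_assoc]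
    obtain ⟨v, hv, hvlen⟩ := square_conj (r ++ q) x y hsq (by
      have := congrArg List.length hw
      simp at this ⊢
      omega)
    have hvv : (q ++ r) ++ (r ++ q) = v ++ v := by
      rw [← hv, ← hw]; simp [List.append_assoc]
    have hlqr : (q ++ r).length = v.length := by simp at hvlen ⊢; omega
    have h1 : q ++ r = v := by
      have := congrArg (List.take (q ++ r).length) hvv
      rwa [List.take_left' rfl, hlqr, List.take_left' rfl] at this
    have h2 : r ++ q = v := by
      have := congrArg (List.drop (q ++ r).length) hvv
      rwa [List.drop_left' rfl, hlqr, List.drop_left' rfl] at this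
    rw [h1, h2]
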